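/- Let g_j(x) = b_j - ζ(x - a_j; c_j) for j = 1, ..., M with real parameters a_j, b_j, c_j, where ζ(x;c) = -log((e^{x/2-c}+e^{-x/2+c})/(e^{x/2+c}+e^{-x/2-c})). Then the composition G = g_M ∘ ⋯ ∘ g_1 has a unique fixed point x_s, and for any initial value x₀ the iterates x_{k+1} = G(x_k) converge to x_s as k → ∞. -/

import Mathlib

noncomputable def zeta (x c : ℝ) : ℝ :=
  -Real.log ((Real.exp (x / 2 - c) + Real.exp (-x / 2 + c)) /
    (Real.exp (x / 2 + c) + Real.exp (-x / 2 - c)))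

noncomputable def gRing {M : ℕ} (a b c : Fin M → ℝ) (j : Fin M) : ℝ → ℝ :=
  fun x => b j - zeta (x - a j) (c j)

/-- `G = g_M ∘ ⋯ ∘ g_1`, the one-complete-turn map of the forward recursion. -/
noncomputable def GRing {M : ℕ} (a b c : Fin M → ℝ) : ℝ → ℝ :=
  (List.ofFn (gRing a b c)).foldl (fun acc g => g ∘ acc) id

lemma zeta_eq (x c : ℝ) :
    zeta x c = Real.log (Real.cosh (x / 2 + c)) - Real.log (Real.cosh (x / 2 - c)) := by
  have h1 : Real.exp (x / 2 - c) + Real.exp (-x / 2 + c) = 2 * Real.cosh (x / 2 - c) := by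
    rw [Real.cosh_eq]; ring_nf
  have h2 : Real.exp (x / 2 + c) + Real.exp (-x / 2 - c) = 2 * Real.cosh (x / 2 + c) := by
    rw [Real.cosh_eq]; ring_nf
  have hp1 : (0 : ℝ) < Real.cosh (x / 2 - c) := Real.cosh_pos _
  have hp2 : (0 : ℝ) < Real.cosh (x / 2 + c) := Real.cosh_pos _
  rw [zeta, h1, h2, Real.log_div (by positivity) (by positivity),
    Real.log_mul (by norm_num) hp1.ne', Real.log_mul (by norm_num) hp2.ne']
  ring

lemma zeta_hasDerivAt (c x : ℝ) :
    HasDerivAt (fun x => zeta x c)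
      ((Real.cosh (x / 2 + c))⁻¹ * (Real.sinh (x / 2 + c) * (1 / 2)) -
        (Real.cosh (x / 2 - c))⁻¹ * (Real.sinh (x / 2 - c) * (1 / 2))) x := by
  have hA : HasDerivAt (fun x : ℝ => x / 2 + c) (1 / 2) x :=
    ((hasDerivAt_id x).div_const 2).add_const c
  have hB : HasDerivAt (fun x : ℝ => x / 2 - c) (1 / 2) x :=
    ((hasDerivAt_id x).div_const 2).sub_const c
  have hcA := (Real.hasDerivAt_cosh (x / 2 + c)).comp x hA
  have hcB := (Real.hasDerivAt_cosh (x / 2 - c)).comp x hB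
  have hlA := (Real.hasDerivAt_log (Real.cosh_pos (x / 2 + c)).ne').comp x hcA
  have hlB := (Real.hasDerivAt_log (Real.cosh_pos (x / 2 - c)).ne').comp x hcB
  have := hlA.sub hlB
  refine HasDerivAt.congr_of_eventuallyEq (by simpa [Function.comp, mul_comm] using this) ?_
  filter_upwards with y
  rw [zeta_eq]; rfl

lemma zeta_deriv_bound (c x : ℝ) :
    |(Real.cosh (x / 2 + c))⁻¹ * (Real.sinh (x / 2 + c) * (1 / 2)) -
        (Real.cosh (x / 2 - c))⁻¹ * (Real.sinh (x / 2 - c) * (1 / 2))|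
      ≤ |Real.sinh c| / Real.cosh c := by
  set A := x / 2 + c with hA
  set B := x / 2 - c with hB
  have hpA : (0 : ℝ) < Real.cosh A := Real.cosh_pos _
  have hpB : (0 : ℝ) < Real.cosh B := Real.cosh_pos _
  have hpc : (0 : ℝ) < Real.cosh c := Real.cosh_pos _
  have hprod : Real.cosh A * Real.cosh B = Real.cosh c ^ 2 + Real.sinh (x / 2) ^ 2 := by
    have e1 : A = x / 2 + c := hA
    have e2 : B = x / 2 - c := hB
    rw [e1, e2, Real.cosh_add, Real.cosh_sub]
    have h1 := Real.cosh_sq_sub_sinh_sq c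
    have h2 := Real.cosh_sq_sub_sinh_sq (x / 2)
    nlinarith
  have hnum : Real.sinh A * Real.cosh B - Real.cosh A * Real.sinh B
      = 2 * Real.sinh c * Real.cosh c := by
    rw [← Real.sinh_sub]
    have : A - B = 2 * c := by rw [hA, hB]; ring
    rw [this, Real.sinh_two_mul]
  have hd : (Real.cosh A)⁻¹ * (Real.sinh A * (1 / 2)) - (Real.cosh B)⁻¹ * (Real.sinh B * (1 / 2))
      = Real.sinh c * Real.cosh c / (Real.cosh c ^ 2 + Real.sinh (x / 2) ^ 2) := by
    rw [← hprod]
    field_simp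
    nlinarith [hnum]
  rw [hd, abs_div, abs_mul, abs_of_pos (by nlinarith : (0:ℝ) < Real.cosh c ^ 2 + Real.sinh (x/2) ^ 2),
    abs_of_pos hpc]
  rw [div_le_div_iff₀ (by nlinarith) hpc]
  have h1 : Real.cosh c ^ 2 ≤ Real.cosh c ^ 2 + Real.sinh (x / 2) ^ 2 := by nlinarith [sq_nonneg (Real.sinh (x/2))]
  nlinarith [abs_nonneg (Real.sinh c)]

/-- Lipschitz constant for `zeta · c`. -/
noncomputable def zetaK (c : ℝ) : NNReal := Real.toNNReal (|Real.sinh c| / Real.cosh c)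

lemma zetaK_lt_one (c : ℝ) : zetaK c < 1 := by
  have hpc : (0 : ℝ) < Real.cosh c := Real.cosh_pos _
  have h : |Real.sinh c| / Real.cosh c < 1 := by
    rw [div_lt_one hpc]
    have h1 := Real.cosh_sq_sub_sinh_sq c
    nlinarith [abs_nonneg (Real.sinh c), sq_abs (Real.sinh c)]
  rw [zetaK, ← Real.toNNReal_one]
  exact (Real.toNNReal_lt_toNNReal_iff (by norm_num)).mpr h

lemma zeta_lipschitz (c : ℝ) : LipschitzWith (zetaK c) (fun x => zeta x c) := by
  have hdiff : Differentiable ℝ (fun x => zeta x c) :=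
    fun x => (zeta_hasDerivAt c x).differentiableAt
  refine lipschitzWith_of_nnnorm_deriv_le hdiff fun x => ?_
  rw [(zeta_hasDerivAt c x).deriv]
  rw [← NNReal.coe_le_coe]
  have hnn : (0:ℝ) ≤ |Real.sinh c| / Real.cosh c := by positivity
  rw [coe_nnnorm, Real.norm_eq_abs, zetaK, Real.coe_toNNReal _ hnn]
  exact zeta_deriv_bound c x

lemma gRing_lipschitz {M : ℕ} (a b c : Fin M → ℝ) (j : Fin M) :
    LipschitzWith (zetaK (c j)) (gRing a b c j) := by
  refine LipschitzWith.of_dist_le_mul fun x y => ?_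
  have h := (zeta_lipschitz (c j)).dist_le_mul (x - a j) (y - a j)
  calc dist (gRing a b c j x) (gRing a b c j y)
      = dist (zeta (x - a j) (c j)) (zeta (y - a j) (c j)) := dist_sub_left _ _ _
    _ ≤ (zetaK (c j) : ℝ) * dist (x - a j) (y - a j) := h
    _ = (zetaK (c j) : ℝ) * dist x y := by rw [dist_sub_right]

lemma foldl_lipschitz (K : NNReal) :
    ∀ (l : List (ℝ → ℝ)), (∀ f ∈ l, LipschitzWith K f) →
      ∀ (g : ℝ → ℝ) (C : NNReal), LipschitzWith C g →
      LipschitzWith (K ^ l.length * C) (l.foldl (fun acc g => g ∘ acc) g)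
  | [], _, g, C, hg => by simpa using hg
  | f :: l, h, g, C, hg => by
    have hf : LipschitzWith K f := h f List.mem_cons_self
    have := foldl_lipschitz K l (fun f' hf' => h f' (List.mem_cons_of_mem _ hf'))
      (f ∘ g) (K * C) (hf.comp hg)
    simp only [List.foldl_cons, List.length_cons]
    have he : K ^ (l.length + 1) * C = K ^ l.length * (K * C) := by ring
    rw [he]
    exact this

theorem ring_recursion_converges (M : ℕ) (hM : 0 < M) (a b c : Fin M → ℝ) :
    ∃ xs : ℝ, GRing a b c xs = xs ∧ (∀ y, GRing a b c y = y → y = xs) ∧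
      ∀ x0 : ℝ, Filter.Tendsto (fun k => (GRing a b c)^[k] x0) Filter.atTop (nhds xs) := by
  set K : NNReal := Finset.univ.sup (fun j : Fin M => zetaK (c j)) with hK
  have hKlt : K < 1 := by
    rw [hK]
    refine Finset.sup_lt_iff (by norm_num) |>.mpr fun j _ => zetaK_lt_one (c j)
  have hlip : LipschitzWith (K ^ M) (GRing a b c) := by
    have := foldl_lipschitz K (List.ofFn (gRing a b c))
      (by
        intro f hf
        rw [List.mem_ofFn] at hf
        obtain ⟨j, rfl⟩ := hf
        exact (gRing_lipschitz a b c j).weaken (hK ▸ Finset.le_sup (f := fun j => zetaK (c j)) (Finset.mem_univ j)))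
      id 1 LipschitzWith.id
    simpa [GRing, List.length_ofFn] using this
  have hcontr : ContractingWith (K ^ M) (GRing a b c) :=
    ⟨pow_lt_one₀ zero_le hKlt hM.ne', hlip⟩
  refine ⟨hcontr.fixedPoint (GRing a b c), hcontr.fixedPoint_isFixedPt, ?_, ?_⟩
  · intro y hy; exact hcontr.fixedPoint_unique hy
  · intro x0; exact hcontr.tendsto_iterate_fixedPoint x0
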